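/- For positive integers a_1,...,a_n, the numerator N and denominator D of the continued fraction [a_1,...,a_n] satisfy the identity N[a_n,...,a_2,a_1,a_1,a_2,...,a_n] = N[a_1,...,a_n]² + N[a_2,...,a_n]², where N[b_1,...,b_m] denotes the continued fraction numerator. -/

import Mathlib

/-- The continuant: `cont [a₁,...,aₙ]` is the numerator N[a₁,...,aₙ] of the
continued fraction [a₁,...,aₙ], with N[] = 1. -/
def cont : List ℕ → ℕ
  | [] => 1
  | [a] => a
  | a :: b :: l => a * cont (b :: l) + cont l

theorem cont_append : ∀ (x : List ℕ), x ≠ [] → ∀ (y : List ℕ), y ≠ [] →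
    cont (x ++ y) = cont x * cont y + cont x.dropLast * cont y.tail
  | [a], _, c :: y', _ => by simp [cont]
  | [a, b], _, c :: y', _ => by simp [cont]; ring
  | a :: b :: c :: x', _, y, hy => by
    have h1 := cont_append (b :: c :: x') (by simp) y hy
    have h2 := cont_append (c :: x') (by simp) y hy
    simp only [List.cons_append, List.dropLast] at *
    show a * cont (b :: c :: (x' ++ y)) + cont (c :: (x' ++ y)) = _
    rw [h1, h2]
    show _ = (a * cont (b :: c :: x') + cont (c :: x')) * cont y +
      (a * cont (b :: (c :: x').dropLast) + cont ((c :: x').dropLast)) * cont y.tail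
    ring
  termination_by x => x.length

theorem dropLast_rev (l : List ℕ) : l.reverse.dropLast = l.tail.reverse := by
  have := List.tail_reverse (l := l.reverse)
  rw [List.reverse_reverse] at this
  rw [this, List.reverse_reverse]

theorem cont_reverse : ∀ l : List ℕ, cont l.reverse = cont l
  | [] => rfl
  | [a] => rfl
  | a :: b :: l' => by
    have h1 := cont_reverse (b :: l')
    have h2 := cont_reverse l'
    rw [show (a :: b :: l').reverse = (b :: l').reverse ++ [a] by simp,
      cont_append _ (by simp) [a] (by simp), dropLast_rev]
    simp only [List.tail_cons] at *
    rw [h1, h2]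
    show _ = a * cont (b :: l') + cont l'
    simp [cont]
    ring
  termination_by l => l.length

/-- N[aₙ,...,a₂,a₁,a₁,a₂,...,aₙ] = N[a₁,...,aₙ]² + N[a₂,...,aₙ]². -/
theorem stmt19 (l : List ℕ) (hl : l ≠ []) (hpos : ∀ x ∈ l, 0 < x) :
    cont (l.reverse ++ l) = (cont l) ^ 2 + (cont l.tail) ^ 2 := by
  rw [cont_append _ (by simpa) _ hl, dropLast_rev, cont_reverse, cont_reverse]
  ring
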